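/- Let 1 ≤ k < n. Then (n,k) is reachable from (1,1) under the maps Ĝ(x,y)=(x+y,y) and Ŝ(x,y)=(3x−2y+1,2x−y+1) if and only if (n−k, h) is reachable, where h is the remainder of k upon division by 2n−2k+1 (equivalently h ≡ k mod (2n−2k+1) with 0 ≤ h ≤ 2n−2k). Here (0,0) and (1,1) are declared reachable. -/
import Mathlib


def Ghat (p : ℤ × ℤ) : ℤ × ℤ := (p.1 + p.2, p.2)

def Shat (p : ℤ × ℤ) : ℤ × ℤ := (3 * p.1 - 2 * p.2 + 1, 2 * p.1 - p.2 + 1)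

def applyWord (w : List Bool) (p : ℤ × ℤ) : ℤ × ℤ :=
  w.foldr (fun b q => if b then Shat q else Ghat q) p

/-- `(0,0)` is reachable, and so is anything obtained from `(1,1)` by a word in `Ĝ, Ŝ`. -/
def Reachable (p : ℤ × ℤ) : Prop :=
  p = (0, 0) ∨ ∃ w : List Bool, applyWord w (1, 1) = p

lemma applyWord_append (l1 l2 : List Bool) (p : ℤ × ℤ) :
    applyWord (l1 ++ l2) p = applyWord l1 (applyWord l2 p) := by
  simp [applyWord, List.foldr_append]

lemma applyWord_cons (b : Bool) (w : List Bool) (p : ℤ × ℤ) :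
    applyWord (b :: w) p = if b then Shat (applyWord w p) else Ghat (applyWord w p) := by
  simp [applyWord]

lemma applyWord_replicate (j : ℕ) (x y : ℤ) :
    applyWord (List.replicate j true) (x, y)
      = (x + j * (2 * (x - y) + 1), y + j * (2 * (x - y) + 1)) := by
  induction j with
  | zero => simp [applyWord]
  | succ j ih =>
    rw [List.replicate_succ, applyWord_cons, ih]
    simp only [if_true, Shat]
    push_cast
    rw [Prod.mk.injEq]
    constructor <;> ring

lemma word_inv (w : List Bool) :
    1 ≤ (applyWord w (1, 1)).2 ∧ (applyWord w (1, 1)).2 ≤ (applyWord w (1, 1)).1 := by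
  induction w with
  | nil => simp [applyWord]
  | cons b w ih =>
    rw [applyWord_cons]
    rcases hq : applyWord w (1, 1) with ⟨x, y⟩
    rw [hq] at ih
    cases b <;> simp only [if_true, if_false, Ghat, Shat] <;> dsimp at ih ⊢ <;> omega

lemma forward_lemma (w : List Bool) : ∀ n k : ℤ, applyWord w (1, 1) = (n, k) →
    1 ≤ k → k < n → Reachable (n - k, k % (2 * (n - k) + 1)) := by
  induction w with
  | nil =>
    intro n k h h1 h2
    simp [applyWord, Prod.ext_iff] at h
    omega
  | cons b w ih =>
    intro n k h h1 h2
    obtain ⟨hy1, hy2⟩ := word_inv w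
    rw [applyWord_cons] at h
    cases b with
    | false =>
      simp only [Bool.false_eq_true, if_false, Ghat, Prod.mk.injEq] at h
      have hp1 : (applyWord w (1, 1)).1 = n - k := by omega
      have hp2 : (applyWord w (1, 1)).2 = k := by omega
      have hkle : k ≤ n - k := by omega
      have hmod : k % (2 * (n - k) + 1) = k := Int.emod_eq_of_lt (by omega) (by omega)
      right
      exact ⟨w, by rw [hmod, ← hp1, ← hp2]⟩
    | true =>
      simp only [if_true, Shat, Prod.mk.injEq] at h
      set p := applyWord w (1, 1) with hp
      have hp1 : p.1 = n - (2 * (n - k) + 1) := by omega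
      have hp2 : p.2 = k - (2 * (n - k) + 1) := by omega
      have key := ih (n - (2 * (n - k) + 1)) (k - (2 * (n - k) + 1))
        (by rw [← hp1, ← hp2]) (by omega) (by omega)
      have e1 : n - (2 * (n - k) + 1) - (k - (2 * (n - k) + 1)) = n - k := by ring
      rw [e1] at key
      have e3 : (k - (2 * (n - k) + 1)) % (2 * (n - k) + 1) = k % (2 * (n - k) + 1) := by
        rw [Int.sub_emod, Int.emod_self, sub_zero, Int.emod_emod_of_dvd _ dvd_rfl]
      rwa [e3] at key

theorem modular_recursion (n k : ℤ) (hk : 1 ≤ k) (hkn : k < n) :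
    Reachable (n, k) ↔ Reachable (n - k, k % (2 * n - 2 * k + 1)) := by
  have hc : 2 * n - 2 * k + 1 = 2 * (n - k) + 1 := by ring
  rw [hc]
  set c : ℤ := 2 * (n - k) + 1 with hcdef
  have hcpos : 0 < c := by omega
  constructor
  · rintro (h | ⟨w, hw⟩)
    · exfalso
      rw [Prod.ext_iff] at h
      simp at h
      omega
    · exact forward_lemma w n k hw hk hkn
  · rintro (h | ⟨w, hw⟩)
    · exfalso
      rw [Prod.ext_iff] at h
      simp at h
      omega
    · set j : ℤ := k / c with hj
      have hj0 : 0 ≤ j := Int.ediv_nonneg (by omega) (by omega)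
      have hdecomp : k % c + c * j = k := Int.emod_add_mul_ediv k c
      right
      refine ⟨List.replicate j.toNat true ++ (false :: w), ?_⟩
      rw [applyWord_append, applyWord_cons, hw]
      simp only [if_false, Ghat]
      dsimp
      have hstep : ((n - k : ℤ), k % c).1 + ((n - k : ℤ), k % c).2 = n - k + k % c := rfl
      rw [applyWord_replicate]
      have htn : (j.toNat : ℤ) = j := Int.toNat_of_nonneg hj0
      have e2 : 2 * (n - k + k % c - k % c) + 1 = c := by ring
      rw [e2, htn, Prod.ext_iff]
      constructor <;> dsimp <;> nlinarith [hdecomp]
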